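/- arXiv:1702.01557 — 6 statements merged into one kernel-verified Lean document; each statement's English description precedes it below -/
import Mathlib

section
/- Two effects e and f are coexistent if and only if there exist effects g₁, g₂, g₃ ∈ E with g₁ + g₂ = e, g₁ + g₃ = f, and g₁ + g₂ + g₃ ≤ u (pointwise on S). -/
lemma affine_sum_apply {V : Type*} [NormedAddCommGroup V] [NormedSpace ℝ V]
    {ι : Type*} (s : Finset ι) (G : ι → (V →ᵃ[ℝ] ℝ)) (ω : V) :
    (∑ i ∈ s, G i) ω = ∑ i ∈ s, G i ω := by
  classical
  induction s using Finset.cons_induction with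
  | empty => simp
  | cons a s ha ih =>
    rw [Finset.cons_eq_insert] at *
    simp [Finset.sum_insert ha, AffineMap.coe_add, Pi.add_apply, ih]

/-- `e` and `f` are coexistent (obtainable from a single observable)
iff there are effects `g₁ g₂ g₃` with `g₁+g₂ = e`, `g₁+g₃ = f`, `g₁+g₂+g₃ ≤ u`. -/
theorem coexistent_iff_three_effects
    {V : Type*} [NormedAddCommGroup V] [NormedSpace ℝ V] [FiniteDimensional ℝ V]
    (S : Set V) (hS : IsCompact S) (hconv : Convex ℝ S)
    (E : Set (V →ᵃ[ℝ] ℝ))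
    (hE : E = {f : V →ᵃ[ℝ] ℝ | ∀ ω ∈ S, 0 ≤ f ω ∧ f ω ≤ 1})
    (u : V →ᵃ[ℝ] ℝ) (hu : u = AffineMap.const ℝ V (1 : ℝ))
    (e f : V →ᵃ[ℝ] ℝ) (he : e ∈ E) (hf : f ∈ E) :
    (∃ (n : ℕ) (G : Fin n → (V →ᵃ[ℝ] ℝ)),
        (∀ i, G i ∈ E) ∧ (∑ i, G i) = u ∧
        ∃ Ie If : Finset (Fin n),
          e = ∑ i ∈ Ie, G i ∧ f = ∑ i ∈ If, G i)
    ↔ (∃ g₁ g₂ g₃, g₁ ∈ E ∧ g₂ ∈ E ∧ g₃ ∈ E ∧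
        g₁ + g₂ = e ∧ g₁ + g₃ = f ∧
        ∀ ω ∈ S, (g₁ + g₂ + g₃) ω ≤ u ω) := by
  classical
  subst hE hu
  constructor
  · rintro ⟨n, G, hG, hsum, Ie, If, hIe, hIf⟩
    have hGnn : ∀ i ω, ω ∈ S → 0 ≤ G i ω := fun i ω hω => (hG i ω hω).1
    have husum : ∀ ω ∈ S, (∑ i, G i ω) = 1 := by
      intro ω hω
      have := congrArg (fun g : V →ᵃ[ℝ] ℝ => g ω) hsum
      simpa [affine_sum_apply] using this
    -- key: partial sums are in E
    have hpart : ∀ (s : Finset (Fin n)), (∑ i ∈ s, G i) ∈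
        {f : V →ᵃ[ℝ] ℝ | ∀ ω ∈ S, 0 ≤ f ω ∧ f ω ≤ 1} := by
      intro s ω hω
      rw [affine_sum_apply]
      constructor
      · exact Finset.sum_nonneg fun i _ => hGnn i ω hω
      · calc ∑ i ∈ s, G i ω ≤ ∑ i, G i ω :=
              Finset.sum_le_sum_of_subset_of_nonneg (Finset.subset_univ s)
                (fun i _ _ => hGnn i ω hω)
          _ = 1 := husum ω hω
    refine ⟨∑ i ∈ Ie ∩ If, G i, ∑ i ∈ Ie \ If, G i, ∑ i ∈ If \ Ie, G i,
      hpart _, hpart _, hpart _, ?_, ?_, ?_⟩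
    · rw [Finset.sum_inter_add_sum_sdiff, hIe]
    · rw [Finset.inter_comm, Finset.sum_inter_add_sum_sdiff, hIf]
    · intro ω hω
      have : (∑ i ∈ Ie ∩ If, G i) + (∑ i ∈ Ie \ If, G i) + (∑ i ∈ If \ Ie, G i)
          = ∑ i ∈ Ie ∪ If, G i := by
        rw [Finset.sum_inter_add_sum_sdiff]
        rw [← Finset.sum_union (Finset.disjoint_sdiff), Finset.union_sdiff_self_eq_union]
      rw [this]
      simpa using (hpart (Ie ∪ If) ω hω).2
  · rintro ⟨g₁, g₂, g₃, h1, h2, h3, he', hf', hle⟩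
    set r : V →ᵃ[ℝ] ℝ := AffineMap.const ℝ V (1 : ℝ) - (g₁ + g₂ + g₃) with hr
    have hrE : r ∈ {f : V →ᵃ[ℝ] ℝ | ∀ ω ∈ S, 0 ≤ f ω ∧ f ω ≤ 1} := by
      intro ω hω
      have h1' := (h1 ω hω).1
      have h2' := (h2 ω hω).1
      have h3' := (h3 ω hω).1
      have hle' := hle ω hω
      simp only [hr, AffineMap.coe_sub, AffineMap.coe_add, Pi.sub_apply, Pi.add_apply, AffineMap.coe_const,
        Function.const_apply] at *
      constructor <;> linarith
    refine ⟨4, ![g₁, g₂, g₃, r], ?_, ?_, {0, 1}, {0, 2}, ?_, ?_⟩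
    · intro i
      fin_cases i <;> simpa using (by assumption : _)
    · ext ω
      simp [Fin.sum_univ_four, hr]
      try ring
    · rw [Finset.sum_pair (by decide)]
      simp [← he']
    · rw [Finset.sum_pair (by decide)]
      simp [← hf']
end

section
/- If K ⊆ ℝ^{d-1} is point symmetric (s ∈ K ⟹ -s ∈ K), then every extremal effect e = (𝐞, e^d) of the effect space E other than o and u satisfies e^d = 1/2. -/
open Matrix

/-- If `K` is point symmetric, every nontrivial extremal effect lies
on the hyperplane `e.2 = 1/2`. -/
theorem extreme_effect_on_half_hyperplane
    {m : ℕ} (K : Set (Fin m → ℝ)) (hK : IsCompact K) (hconv : Convex ℝ K)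
    (hne : K.Nonempty) (hsym : ∀ s ∈ K, -s ∈ K)
    (E : Set ((Fin m → ℝ) × ℝ))
    (hE : E = {e : (Fin m → ℝ) × ℝ | ∀ s ∈ K, 0 ≤ e.1 ⬝ᵥ s + e.2 ∧ e.1 ⬝ᵥ s + e.2 ≤ 1})
    (e : (Fin m → ℝ) × ℝ) (he : e ∈ Set.extremePoints ℝ E)
    (ho : e ≠ ((0 : Fin m → ℝ), (0 : ℝ))) (hu : e ≠ ((0 : Fin m → ℝ), (1 : ℝ))) :
    e.2 = 1/2 := by
  subst hE
  obtain ⟨heE, hext⟩ := he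
  simp only [Set.mem_setOf_eq] at heE
  -- basic inequalities coming from symmetry
  have hle : ∀ s ∈ K, e.1 ⬝ᵥ s ≤ e.2 := by
    intro s hs
    have h := (heE (-s) (hsym s hs)).1
    rw [dotProduct_neg] at h
    linarith
  have hge : ∀ s ∈ K, e.2 - 1 ≤ e.1 ⬝ᵥ s := by
    intro s hs
    have h := (heE (-s) (hsym s hs)).2
    rw [dotProduct_neg] at h
    linarith
  obtain ⟨s0, hs0⟩ := hne
  have hc0 : 0 ≤ e.2 := by
    have h1 := (heE s0 hs0).1
    have h2 := hle s0 hs0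
    linarith
  have hc1 : e.2 ≤ 1 := by
    have h1 := (heE s0 hs0).2
    have h2 := hge s0 hs0
    linarith
  rcases lt_trichotomy e.2 (1/2) with h | h | h
  · -- low case: decompose using the zero effect
    exfalso
    obtain ⟨t, ht1, htc⟩ : ∃ t : ℝ, 1 < t ∧ 2 * t * e.2 ≤ 1 := by
      rcases eq_or_lt_of_le hc0 with h0 | h0
      · exact ⟨2, by norm_num, by rw [← h0]; norm_num⟩
      · refine ⟨1 / (2 * e.2), ?_, ?_⟩
        · rw [lt_div_iff₀ (by linarith)]; linarith
        · rw [mul_one_div, div_mul_eq_mul_div, div_le_one (by nlinarith)]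
    have ht0 : (0:ℝ) < t := by linarith
    have hmem : (t • e) ∈ {e : (Fin m → ℝ) × ℝ |
        ∀ s ∈ K, 0 ≤ e.1 ⬝ᵥ s + e.2 ∧ e.1 ⬝ᵥ s + e.2 ≤ 1} := by
      intro s hs
      have h1 := (heE s hs).1
      have h2 := hle s hs
      simp only [Prod.smul_fst, Prod.smul_snd, smul_dotProduct, smul_eq_mul]
      constructor
      · nlinarith
      · nlinarith
    have hmem0 : ((0 : Fin m → ℝ), (0 : ℝ)) ∈ {e : (Fin m → ℝ) × ℝ |
        ∀ s ∈ K, 0 ≤ e.1 ⬝ᵥ s + e.2 ∧ e.1 ⬝ᵥ s + e.2 ≤ 1} := by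
      intro s hs
      simp [zero_dotProduct]
    have hseg : e ∈ openSegment ℝ (t • e) ((0 : Fin m → ℝ), (0 : ℝ)) := by
      refine ⟨1 / t, 1 - 1 / t, by positivity, ?_, by ring, ?_⟩
      · have : 1 / t < 1 := by rw [div_lt_one ht0]; linarith
        linarith
      · rw [smul_smul, one_div_mul_cancel (ne_of_gt ht0)]
        simp
    have heq := (hext hmem hmem0 hseg)
    -- t • e = e forces e = 0
    have : (t - 1) • e = 0 := by
      rw [sub_smul, one_smul, heq, sub_self]
    have he0 : e = 0 := by
      have := smul_eq_zero.mp this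
      rcases this with h' | h'
      · exact absurd h' (by intro hh; rw [sub_eq_zero] at hh; linarith)
      · exact h'
    exact ho (by rw [he0]; rfl)
  · exact h
  · -- high case: decompose using the unit effect
    exfalso
    obtain ⟨t, ht1, htc⟩ : ∃ t : ℝ, 1 < t ∧ 2 * t * (1 - e.2) ≤ 1 := by
      rcases eq_or_lt_of_le hc1 with h0 | h0
      · exact ⟨2, by norm_num, by rw [h0]; norm_num⟩
      · refine ⟨1 / (2 * (1 - e.2)), ?_, ?_⟩
        · rw [lt_div_iff₀ (by linarith)]; linarith
        · rw [mul_one_div, div_mul_eq_mul_div, div_le_one (by nlinarith)]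
    have ht0 : (0:ℝ) < t := by linarith
    set u : (Fin m → ℝ) × ℝ := ((0 : Fin m → ℝ), (1 : ℝ)) with hu_def
    have humem : u ∈ {e : (Fin m → ℝ) × ℝ |
        ∀ s ∈ K, 0 ≤ e.1 ⬝ᵥ s + e.2 ∧ e.1 ⬝ᵥ s + e.2 ≤ 1} := by
      intro s hs
      simp [hu_def, zero_dotProduct]
    have hmem : (u + t • (e - u)) ∈ {e : (Fin m → ℝ) × ℝ |
        ∀ s ∈ K, 0 ≤ e.1 ⬝ᵥ s + e.2 ∧ e.1 ⬝ᵥ s + e.2 ≤ 1} := by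
      intro s hs
      have h1 := (heE s hs).2
      have h2 := hge s hs
      simp only [hu_def, Prod.fst_add, Prod.snd_add, Prod.smul_fst, Prod.smul_snd,
        Prod.fst_sub, Prod.snd_sub, smul_dotProduct, Pi.sub_apply, sub_dotProduct,
        zero_dotProduct, smul_eq_mul, zero_add, sub_zero]
      constructor
      · nlinarith
      · nlinarith
    have hseg : e ∈ openSegment ℝ (u + t • (e - u)) u := by
      refine ⟨1 / t, 1 - 1 / t, by positivity, ?_, by ring, ?_⟩
      · have : 1 / t < 1 := by rw [div_lt_one ht0]; linarith
        linarith
      · rw [smul_add, smul_smul, one_div_mul_cancel (ne_of_gt ht0), one_smul]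
        module
    have heq := (hext hmem humem hseg)
    -- u + t • (e - u) = e forces e = u
    have : (t - 1) • (e - u) = 0 := by
      have h' : t • (e - u) = e - u := by
        have := heq
        abel_nf at this ⊢
        linear_combination (norm := module) this
      rw [sub_smul, one_smul, h', sub_self]
    have heu : e = u := by
      rcases smul_eq_zero.mp this with h' | h'
      · exact absurd h' (by intro hh; rw [sub_eq_zero] at hh; linarith)
      · rw [sub_eq_zero] at h'; exact h'
    exact hu heu
end

section
/- Let E be a compact convex effect space with zero o and unit u, and let e be an extremal point of E such that the segment [o,e] is an edge of E (i.e., a face of E). Then the lower set {e' ∈ E : o ≤ e' ≤ e} equals the segment [o,e]. -/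
/-- if `e` is extremal and the segment `[o, e]` is an edge (a face) of
`E`, then the lower set of `e` equals `[o, e]`. -/
theorem lowerSet_eq_segment_of_edge
    {V : Type*} [NormedAddCommGroup V] [NormedSpace ℝ V] [FiniteDimensional ℝ V]
    (S : Set V) (hS : IsCompact S) (hconv : Convex ℝ S)
    (E : Set (V →ᵃ[ℝ] ℝ))
    (hE : E = {f : V →ᵃ[ℝ] ℝ | ∀ ω ∈ S, 0 ≤ f ω ∧ f ω ≤ 1})
    (e : V →ᵃ[ℝ] ℝ) (he : e ∈ Set.extremePoints ℝ E)
    (hedge : IsExtreme ℝ E (segment ℝ 0 e)) :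
    {e' ∈ E | ∀ ω ∈ S, 0 ≤ e' ω ∧ e' ω ≤ e ω} = segment ℝ 0 e := by
  have heE : e ∈ E := he.1
  have heB : ∀ ω ∈ S, 0 ≤ e ω ∧ e ω ≤ 1 := by rw [hE] at heE; exact heE
  ext e'
  constructor
  · rintro ⟨he'E, hle⟩
    -- `e - e'` is also an effect
    have hsub : e - e' ∈ E := by
      rw [hE]
      intro ω hω
      have h1 := hle ω hω
      have h2 := heB ω hω
      constructor
      · simp only [AffineMap.coe_sub, Pi.sub_apply]
        linarith [h1.2]
      · simp only [AffineMap.coe_sub, Pi.sub_apply]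
        linarith [h1.1, h2.2]
    -- midpoint of e' and e - e' is (1/2) • e, which lies in segment 0 e
    have hmem : ( (1:ℝ)/2) • e ∈ openSegment ℝ e' (e - e') := by
      refine ⟨1/2, 1/2, by norm_num, by norm_num, by norm_num, ?_⟩
      have : ((1:ℝ)/2) • e' + ((1:ℝ)/2) • (e - e') = ((1:ℝ)/2) • e := by
        rw [smul_sub]; abel
      exact this
    have hseg : ((1:ℝ)/2) • e ∈ segment ℝ 0 e := by
      refine ⟨1/2, 1/2, by norm_num, by norm_num, by norm_num, ?_⟩
      rw [smul_zero, zero_add]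
    exact hedge.2 he'E hsub hseg hmem
  · rintro ⟨a, b, ha, hb, hab, rfl⟩
    have hbe : a • (0 : V →ᵃ[ℝ] ℝ) + b • e = b • e := by rw [smul_zero, zero_add]
    rw [hbe]
    refine ⟨?_, ?_⟩
    · rw [hE]
      intro ω hω
      have h := heB ω hω
      have : (b • e) ω = b * e ω := rfl
      rw [this]
      constructor
      · exact mul_nonneg hb h.1
      · calc b * e ω ≤ 1 * 1 := by
              apply mul_le_mul (by linarith) h.2 h.1 zero_le_one
          _ = 1 := one_mul 1
    · intro ω hω
      have h := heB ω hω
      have hb1 : b ≤ 1 := by linarith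
      have : (b • e) ω = b * e ω := rfl
      rw [this]
      exact ⟨mul_nonneg hb h.1, by nlinarith [h.1]⟩
end

section
/- An effect f is coexistent with an effect e if and only if f can be written as f = g₁ + g₃ where g₁ is in the lower set of e (o ≤ g₁ ≤ e) and g₃ is in the lower set of ē = u - e; i.e., the set of effects coexistent with e equals the Minkowski sum of the lower sets of e and ē, intersected with E. -/
/-- `f` is coexistent with `e` iff `f = g₁ + g₃` with `g₁` in the lower
set of `e` and `g₃` in the lower set of `ē = u - e`. -/
theorem coexistent_iff_mem_minkowski_sum_of_lower_sets
    {V : Type*} [NormedAddCommGroup V] [NormedSpace ℝ V] [FiniteDimensional ℝ V]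
    (S : Set V) (hS : IsCompact S) (hconv : Convex ℝ S)
    (E : Set (V →ᵃ[ℝ] ℝ))
    (hE : E = {f : V →ᵃ[ℝ] ℝ | ∀ ω ∈ S, 0 ≤ f ω ∧ f ω ≤ 1})
    (u : V →ᵃ[ℝ] ℝ) (hu : u = AffineMap.const ℝ V (1 : ℝ))
    (e f : V →ᵃ[ℝ] ℝ) (he : e ∈ E) (hf : f ∈ E) :
    (∃ g₁ g₂ g₃, g₁ ∈ E ∧ g₂ ∈ E ∧ g₃ ∈ E ∧
        g₁ + g₂ = e ∧ g₁ + g₃ = f ∧ ∀ ω ∈ S, (g₁ + g₂ + g₃) ω ≤ u ω)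
    ↔ (∃ g₁ g₃,
        (g₁ ∈ E ∧ ∀ ω ∈ S, g₁ ω ≤ e ω) ∧
        (g₃ ∈ E ∧ ∀ ω ∈ S, g₃ ω ≤ (u - e) ω) ∧
        f = g₁ + g₃) := by
  subst hE hu
  constructor
  · rintro ⟨g₁, g₂, g₃, h1, h2, h3, hee, hff, hle⟩
    refine ⟨g₁, g₃, ⟨h1, fun ω hω => ?_⟩, ⟨h3, fun ω hω => ?_⟩, hff.symm⟩
    · have := (h2 ω hω).1
      have := congrArg (fun g => g ω) hee
      simp only [AffineMap.coe_add, Pi.add_apply] at this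
      linarith
    · have hle' := hle ω hω
      have := congrArg (fun g => g ω) hee
      simp only [AffineMap.coe_add, AffineMap.coe_sub, Pi.add_apply, Pi.sub_apply, AffineMap.const_apply] at *
      linarith
  · rintro ⟨g₁, g₃, ⟨h1, hle1⟩, ⟨h3, hle3⟩, hff⟩
    refine ⟨g₁, e - g₁, g₃, h1, fun ω hω => ?_, h3, by abel, hff.symm, fun ω hω => ?_⟩
    · have := (h1 ω hω).2
      have := (h1 ω hω).1
      have := (he ω hω).2
      have := hle1 ω hω
      simp only [AffineMap.coe_sub, Pi.sub_apply]
      constructor <;> linarith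
    · have := hle3 ω hω
      simp only [AffineMap.coe_add, AffineMap.coe_sub, Pi.add_apply, Pi.sub_apply, AffineMap.const_apply] at *
      linarith
end

section
/- For the n-sided regular polygon theory with n even, two unbiased effects e = (e_x, e_y, 1/2) and f = (f_x, f_y, 1/2) on the reflecting hyperplane are coexistent if and only if for all integers k₁, k₂: (f_x - e_x)cos(2k₁π/n) + (f_y - e_y)sin(2k₁π/n) + (f_x + e_x)cos(2k₂π/n) + (f_y + e_y)sin(2k₂π/n) ≤ 1. -/
open Real

/-- The `k`-th pure state of the `n`-sided regular polygon theory. -/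
noncomputable def pureState (n : ℕ) (k : ℕ) : ℝ × ℝ × ℝ :=
  (Real.cos (2 * k * π / n), Real.sin (2 * k * π / n), 1)

/-- The pairing between effect vectors and state vectors. -/
def pair (e w : ℝ × ℝ × ℝ) : ℝ := e.1 * w.1 + e.2.1 * w.2.1 + e.2.2 * w.2.2

/-- The effect space of the `n`-sided regular polygon theory. -/
noncomputable def polygonE (n : ℕ) : Set (ℝ × ℝ × ℝ) :=
  {e | ∀ k : Fin n, 0 ≤ pair e (pureState n k) ∧ pair e (pureState n k) ≤ 1}

noncomputable def pz (n : ℕ) (g : ℝ × ℝ × ℝ) (k : ℤ) : ℝ :=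
  g.1 * Real.cos (2 * k * π / n) + g.2.1 * Real.sin (2 * k * π / n) + g.2.2

lemma pz_natCast (n : ℕ) (g : ℝ × ℝ × ℝ) (k : ℕ) :
    pz n g (k : ℤ) = pair g (pureState n k) := by
  simp [pz, pair, pureState]

lemma pz_add (n : ℕ) (g h : ℝ × ℝ × ℝ) (k : ℤ) :
    pz n (g + h) k = pz n g k + pz n h k := by
  simp [pz, Prod.fst_add, Prod.snd_add]; ring

lemma pz_period (n : ℕ) (hn : 0 < n) (g : ℝ × ℝ × ℝ) (k : ℤ) :
    pz n g (k % (n : ℤ)) = pz n g k := by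
  have hn' : ((n : ℤ) : ℝ) ≠ 0 := by exact_mod_cast hn.ne'
  have hd := congrArg (Int.cast : ℤ → ℝ) (Int.mul_ediv_add_emod k (n : ℤ))
  push_cast at hd
  have h1 : 2 * ((k % (n : ℤ) : ℤ) : ℝ) * π / n + ((k / (n : ℤ) : ℤ) : ℝ) * (2 * π)
      = 2 * (k : ℝ) * π / n := by
    field_simp
    push_cast at hn' ⊢
    linear_combination hd
  unfold pz
  rw [← h1, Real.cos_add_int_mul_two_pi, Real.sin_add_int_mul_two_pi]

lemma pz_antipode (n : ℕ) (hn : 0 < n) (hne : Even n) (g : ℝ × ℝ × ℝ) (k : ℤ) :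
    pz n g k + pz n g (k + (n / 2 : ℕ)) = 2 * g.2.2 := by
  obtain ⟨m, rfl⟩ := hne
  have hm : 0 < m := by omega
  have hm' : (m : ℝ) ≠ 0 := by exact_mod_cast hm.ne'
  have h2 : (m + m) / 2 = m := by omega
  have h1 : 2 * ((k : ℝ) + m) * π / ((m : ℝ) + m) = 2 * (k : ℝ) * π / ((m : ℝ) + m) + π := by
    field_simp
    ring
  unfold pz
  push_cast [h2]
  rw [h1, Real.cos_add_pi, Real.sin_add_pi]
  ring

lemma pz_of_fin (n : ℕ) (hn : 0 < n) (g : ℝ × ℝ × ℝ) (k : ℤ)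
    (h : ∀ j : Fin n, 0 ≤ pair g (pureState n j) ∧ pair g (pureState n j) ≤ 1) :
    0 ≤ pz n g k ∧ pz n g k ≤ 1 := by
  have hn0 : (0 : ℤ) < (n : ℤ) := by exact_mod_cast hn
  have hr0 : 0 ≤ k % (n : ℤ) := Int.emod_nonneg k hn0.ne'
  have hrn : k % (n : ℤ) < (n : ℤ) := Int.emod_lt_of_pos k hn0
  set r : ℕ := (k % (n : ℤ)).toNat with hr
  have hrlt : r < n := by omega
  have hcast : ((r : ℕ) : ℤ) = k % (n : ℤ) := Int.toNat_of_nonneg hr0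
  have := h ⟨r, hrlt⟩
  rw [← pz_natCast] at this
  rwa [← pz_period n hn g k, ← hcast]

lemma sum_le_all (n : ℕ) (hn : 0 < n) (s : ℝ × ℝ × ℝ) (k : ℤ)
    (h : ∀ j : Fin n, pair s (pureState n j) ≤ 1) : pz n s k ≤ 1 := by
  have hn0 : (0 : ℤ) < (n : ℤ) := by exact_mod_cast hn
  have hr0 : 0 ≤ k % (n : ℤ) := Int.emod_nonneg k hn0.ne'
  have hrn : k % (n : ℤ) < (n : ℤ) := Int.emod_lt_of_pos k hn0
  set r : ℕ := (k % (n : ℤ)).toNat with hr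
  have hrlt : r < n := by omega
  have hcast : ((r : ℕ) : ℤ) = k % (n : ℤ) := Int.toNat_of_nonneg hr0
  have := h ⟨r, hrlt⟩
  rw [← pz_natCast] at this
  rwa [← pz_period n hn s k, ← hcast]

/-- coexistence criterion for unbiased effects in even-sided regular
polygon theories. -/
theorem polygon_coexistence_criterion (n : ℕ) (hn : 0 < n) (hne : Even n)
    (ex ey fx fy : ℝ)
    (he : ((ex, ey, (1/2 : ℝ)) : ℝ × ℝ × ℝ) ∈ polygonE n)
    (hf : ((fx, fy, (1/2 : ℝ)) : ℝ × ℝ × ℝ) ∈ polygonE n) :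
    (∃ g₁ g₂ g₃, g₁ ∈ polygonE n ∧ g₂ ∈ polygonE n ∧ g₃ ∈ polygonE n ∧
        g₁ + g₂ = ((ex, ey, (1/2 : ℝ)) : ℝ × ℝ × ℝ) ∧
        g₁ + g₃ = ((fx, fy, (1/2 : ℝ)) : ℝ × ℝ × ℝ) ∧
        ∀ k : Fin n, pair (g₁ + g₂ + g₃) (pureState n k) ≤ 1)
    ↔ (∀ k₁ k₂ : ℤ,
        (fx - ex) * Real.cos (2 * k₁ * π / n) + (fy - ey) * Real.sin (2 * k₁ * π / n)
          + (fx + ex) * Real.cos (2 * k₂ * π / n) + (fy + ey) * Real.sin (2 * k₂ * π / n)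
          ≤ 1) := by
  constructor
  · rintro ⟨g₁, g₂, g₃, hg₁, hg₂, hg₃, h12, h13, hsum⟩ k₁ k₂
    -- pointwise facts over ℤ
    have p1 := fun k => pz_of_fin n hn g₁ k hg₁
    have p2 := fun k => pz_of_fin n hn g₂ k hg₂
    have p3 := fun k => pz_of_fin n hn g₃ k hg₃
    have psum := fun k => sum_le_all n hn (g₁ + g₂ + g₃) k hsum
    have e12 : ∀ k, pz n g₁ k + pz n g₂ k = pz n (ex, ey, (1/2 : ℝ)) k := by
      intro k; rw [← pz_add, h12]
    have e13 : ∀ k, pz n g₁ k + pz n g₃ k = pz n (fx, fy, (1/2 : ℝ)) k := by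
      intro k; rw [← pz_add, h13]
    have esum : ∀ k, pz n g₁ k + pz n g₂ k + pz n g₃ k ≤ 1 := by
      intro k; have := psum k; rwa [pz_add, pz_add] at this
    -- third coordinates
    have hz : g₁.2.2 + g₃.2.2 = 1/2 := by
      have := congrArg (fun p : ℝ × ℝ × ℝ => p.2.2) h13
      simpa [Prod.snd_add] using this
    -- antipode bounds
    have a3 : pz n g₃ k₁ ≤ 2 * g₃.2.2 := by
      have := pz_antipode n hn hne g₃ k₁
      have h0 := (p3 (k₁ + (n / 2 : ℕ))).1
      linarith
    have a1 : pz n g₁ k₂ ≤ 2 * g₁.2.2 := by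
      have := pz_antipode n hn hne g₁ k₂
      have h0 := (p1 (k₂ + (n / 2 : ℕ))).1
      linarith
    have key1 := e12 k₁
    have key2 := e13 k₁
    have key3 := e12 k₂
    have key4 := e13 k₂
    have key5 := esum k₂
    have hg2k1 := (p2 k₁).1
    -- rewrite target in terms of pz values
    have expand : (fx - ex) * Real.cos (2 * k₁ * π / n) + (fy - ey) * Real.sin (2 * k₁ * π / n)
          + (fx + ex) * Real.cos (2 * k₂ * π / n) + (fy + ey) * Real.sin (2 * k₂ * π / n)
        = (pz n (fx, fy, (1/2 : ℝ)) k₁ - pz n (ex, ey, (1/2 : ℝ)) k₁)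
          + (pz n (ex, ey, (1/2 : ℝ)) k₂ + pz n (fx, fy, (1/2 : ℝ)) k₂ - 1) := by
      simp only [pz]; ring
    rw [expand]
    linarith
  · intro h
    -- criterion in pz form
    have hcrit : ∀ k₁ k₂ : ℤ,
        pz n (fx - ex, fy - ey, (0:ℝ)) k₁ + pz n (fx + ex, fy + ey, (0:ℝ)) k₂ ≤ 1 := by
      intro k₁ k₂
      have := h k₁ k₂
      simp only [pz]
      linarith
    set v : ℝ × ℝ × ℝ := (fx + ex, fy + ey, (0:ℝ)) with hv
    set w : ℝ × ℝ × ℝ := (fx - ex, fy - ey, (0:ℝ)) with hw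
    -- maxima over vertices
    have hFin : (Finset.univ : Finset (Fin n)).Nonempty := ⟨⟨0, hn⟩, Finset.mem_univ _⟩
    set M : ℝ := Finset.univ.sup' hFin (fun j : Fin n => pz n v ((j : ℕ) : ℤ)) with hM
    set m : ℝ := Finset.univ.sup' hFin (fun j : Fin n => pz n w ((j : ℕ) : ℤ)) with hm
    have hvM : ∀ k : ℤ, pz n v k ≤ M := by
      intro k
      have hn0 : (0 : ℤ) < (n : ℤ) := by exact_mod_cast hn
      have hr0 : 0 ≤ k % (n : ℤ) := Int.emod_nonneg k hn0.ne'
      have hrn : k % (n : ℤ) < (n : ℤ) := Int.emod_lt_of_pos k hn0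
      have hrlt : (k % (n : ℤ)).toNat < n := by omega
      have hcast : (((k % (n : ℤ)).toNat : ℕ) : ℤ) = k % (n : ℤ) := Int.toNat_of_nonneg hr0
      have := Finset.le_sup' (fun j : Fin n => pz n v ((j : ℕ) : ℤ))
        (Finset.mem_univ (⟨(k % (n : ℤ)).toNat, hrlt⟩ : Fin n))
      rw [← pz_period n hn v k, ← hcast]
      exact this.trans_eq hM.symm
    have hwm : ∀ k : ℤ, pz n w k ≤ m := by
      intro k
      have hn0 : (0 : ℤ) < (n : ℤ) := by exact_mod_cast hn
      have hr0 : 0 ≤ k % (n : ℤ) := Int.emod_nonneg k hn0.ne'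
      have hrn : k % (n : ℤ) < (n : ℤ) := Int.emod_lt_of_pos k hn0
      have hrlt : (k % (n : ℤ)).toNat < n := by omega
      have hcast : (((k % (n : ℤ)).toNat : ℕ) : ℤ) = k % (n : ℤ) := Int.toNat_of_nonneg hr0
      have := Finset.le_sup' (fun j : Fin n => pz n w ((j : ℕ) : ℤ))
        (Finset.mem_univ (⟨(k % (n : ℤ)).toNat, hrlt⟩ : Fin n))
      rw [← pz_period n hn w k, ← hcast]
      exact this.trans_eq hm.symm
    -- antipode: pz v k + pz v (k + n/2) = 0
    have hvneg : ∀ k : ℤ, -pz n v k ≤ M := by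
      intro k
      have h3 := pz_antipode n hn hne v k
      have hz0 : v.2.2 = 0 := rfl
      rw [hz0] at h3
      have h2 := hvM (k + ((n / 2 : ℕ) : ℤ))
      linarith
    have hwneg : ∀ k : ℤ, -pz n w k ≤ m := by
      intro k
      have h3 := pz_antipode n hn hne w k
      have hz0 : w.2.2 = 0 := rfl
      rw [hz0] at h3
      have h2 := hwm (k + ((n / 2 : ℕ) : ℤ))
      linarith
    have hM0 : 0 ≤ M := by
      have h1 := hvM 0
      have h2 := hvneg 0
      linarith
    have hm0 : 0 ≤ m := by
      have h1 := hwm 0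
      have h2 := hwneg 0
      linarith
    -- m + M ≤ 1 via attainment
    have hmM : m + M ≤ 1 := by
      obtain ⟨j₁, _, hj₁⟩ := Finset.exists_mem_eq_sup' hFin (fun j : Fin n => pz n w ((j : ℕ) : ℤ))
      obtain ⟨j₂, _, hj₂⟩ := Finset.exists_mem_eq_sup' hFin (fun j : Fin n => pz n v ((j : ℕ) : ℤ))
      have := hcrit ((j₁ : ℕ) : ℤ) ((j₂ : ℕ) : ℤ)
      rw [hm, hM, hj₁, hj₂]
      exact this
    -- construct the triple
    refine ⟨((ex + fx)/2, (ey + fy)/2, M/2),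
            ((ex - fx)/2, (ey - fy)/2, 1/2 - M/2),
            ((fx - ex)/2, (fy - ey)/2, 1/2 - M/2), ?_, ?_, ?_, ?_, ?_, ?_⟩
    · intro j
      rw [← pz_natCast]
      have h1 := hvM ((j : ℕ) : ℤ)
      have h2 := hvneg ((j : ℕ) : ℤ)
      simp only [pz, hv] at h1 h2 ⊢
      constructor <;> nlinarith
    · intro j
      rw [← pz_natCast]
      have h1 := hwm ((j : ℕ) : ℤ)
      have h2 := hwneg ((j : ℕ) : ℤ)
      simp only [pz, hw] at h1 h2 ⊢
      constructor <;> nlinarith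
    · intro j
      rw [← pz_natCast]
      have h1 := hwm ((j : ℕ) : ℤ)
      have h2 := hwneg ((j : ℕ) : ℤ)
      simp only [pz, hw] at h1 h2 ⊢
      constructor <;> nlinarith
    · show (_, _, _) = _
      ext <;> simp <;> ring
    · show (_, _, _) = _
      ext <;> simp <;> ring
    · intro j
      rw [← pz_natCast]
      have h1 := hvM ((j : ℕ) : ℤ)
      rw [pz_add, pz_add]
      simp only [pz, hv] at h1 ⊢
      nlinarith
end

section
/- In the n-sided regular polygon theory with n even, the nontrivial extremal effects are the n points e_k = (1/2)(cos(2kπ/n) + tan(π/n)sin(2kπ/n), −sin(2kπ/n) + tan(π/n)cos(2kπ/n), 1), k = 0,…,n−1, and all of them lie on the hyperplane z = 1/2; together with o = (0,0,0) and u = (0,0,1) they are all the extremal points of E. -/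
open Real

/-- The nontrivial extremal effect `e_k` of the even-sided polygon effect space. -/
noncomputable def extEffect (n : ℕ) (k : ℕ) : ℝ × ℝ × ℝ :=
  ((1/2) * (Real.cos (2 * k * π / n) + Real.tan (π / n) * Real.sin (2 * k * π / n)),
   (1/2) * (-Real.sin (2 * k * π / n) + Real.tan (π / n) * Real.cos (2 * k * π / n)),
   (1/2 : ℝ))

section Aux
variable {n : ℕ}

lemma npos (hn : 4 ≤ n) : (0:ℝ) < n := by positivity

lemma delta_mem (hn : 4 ≤ n) : 0 < π/n ∧ π/n ≤ π/4 := by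
  have h := Real.pi_pos
  constructor
  · positivity
  · rw [div_le_div_iff₀ (npos hn) (by norm_num)]
    have h4 : (4:ℝ) ≤ n := by exact_mod_cast hn
    nlinarith [h4, h]

lemma cos_delta_pos (hn : 4 ≤ n) : 0 < Real.cos (π/n) := by
  apply Real.cos_pos_of_mem_Ioo
  constructor
  · linarith [(delta_mem hn).1, Real.pi_pos]
  · linarith [(delta_mem hn).2, Real.pi_pos]

lemma sin_delta_pos (hn : 4 ≤ n) : 0 < Real.sin (π/n) := by
  apply Real.sin_pos_of_pos_of_lt_pi (delta_mem hn).1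
  linarith [(delta_mem hn).2, Real.pi_pos]

lemma sin_two_delta_pos (hn : 4 ≤ n) : 0 < Real.sin (2*π/n) := by
  apply Real.sin_pos_of_pos_of_lt_pi
  · have := Real.pi_pos; positivity
  · have h2 : 2*π/n ≤ π/2 := by
      rw [div_le_div_iff₀ (npos hn) (by norm_num)]
      have h4 : (4:ℝ) ≤ n := by exact_mod_cast hn
      nlinarith [h4, Real.pi_pos]
    linarith [Real.pi_pos]

/-- angle periodicity -/
lemma angle_period (hn : 4 ≤ n) (j m : ℕ) :
    Real.cos (2 * ((j + m * n : ℕ):ℝ) * π / n) = Real.cos (2 * (j:ℝ) * π / n) ∧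
    Real.sin (2 * ((j + m * n : ℕ):ℝ) * π / n) = Real.sin (2 * (j:ℝ) * π / n) := by
  have hne : (n:ℝ) ≠ 0 := ne_of_gt (npos hn)
  have h : (2 * ((j + m * n : ℕ):ℝ) * π / n) = 2 * (j:ℝ) * π / n + m * (2*π) := by
    push_cast; field_simp
  rw [h]
  exact ⟨Real.cos_add_nat_mul_two_pi _ m, (Real.sin_periodic.nat_mul m) _⟩

lemma pureState_period (hn : 4 ≤ n) (j m : ℕ) : pureState n (j + m * n) = pureState n j := by
  obtain ⟨h1, h2⟩ := angle_period hn j m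
  simp only [pureState, h1, h2]

lemma mem_all (hn : 4 ≤ n) {e : ℝ × ℝ × ℝ} (he : e ∈ polygonE n) (j : ℕ) :
    0 ≤ pair e (pureState n j) ∧ pair e (pureState n j) ≤ 1 := by
  have hd : pureState n j = pureState n (j % n) := by
    conv_lhs => rw [show j = j % n + (j / n) * n from by
      rw [mul_comm]; exact (Nat.mod_add_div j n).symm]
    exact pureState_period hn _ _
  rw [hd]
  exact he ⟨j % n, Nat.mod_lt _ (by omega)⟩

lemma opp_state (hn : 4 ≤ n) (hne : Even n) (j : ℕ) :
    pureState n (j + n/2) = (-(pureState n j).1, -(pureState n j).2.1, 1) := by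
  have h2 : n = 2 * (n/2) := by obtain ⟨h, rfl⟩ := hne; omega
  have hnn : (n:ℝ) ≠ 0 := ne_of_gt (npos hn)
  have hcast : (n:ℝ) = 2 * ((n/2 : ℕ):ℝ) := by exact_mod_cast congrArg (Nat.cast : ℕ → ℝ) h2
  have hhalf : ((n/2 : ℕ):ℝ) = (n:ℝ)/2 := by linarith
  have h : (2 * ((j + n/2 : ℕ):ℝ) * π / n) = 2 * (j:ℝ) * π / n + π := by
    push_cast [hhalf]
    field_simp
  simp only [pureState, h, Real.cos_add_pi, Real.sin_add_pi]

/-- The pairing of an extremal effect with a pure state. -/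
lemma pair_formula (hn : 4 ≤ n) (k j : ℕ) :
    pair (extEffect n k) (pureState n j)
      = (1 + Real.cos ((2 * ((k + j : ℕ):ℝ) - 1) * π / n) / Real.cos (π/n)) / 2 := by
  have hc := cos_delta_pos hn
  have hnn : (n:ℝ) ≠ 0 := ne_of_gt (npos hn)
  have hang : ((2 * ((k + j : ℕ):ℝ) - 1) * π / n)
      = (2 * (k:ℝ) * π / n + 2 * (j:ℝ) * π / n) - π/n := by push_cast; field_simp
  rw [hang]
  simp only [pair, extEffect, pureState, Real.tan_eq_sin_div_cos]
  rw [Real.cos_sub, Real.cos_add, Real.sin_add]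
  field_simp
  ring

/-- Bound on cosine of odd multiples of π/n for even n. -/
lemma cos_odd_bound (hn : 4 ≤ n) (hne : Even n) (m : ℕ) :
    |Real.cos ((2 * (m:ℝ) - 1) * π / n)| ≤ Real.cos (π/n) := by
  have hnn : (n:ℝ) ≠ 0 := ne_of_gt (npos hn)
  have hπn : 0 < π/n := (delta_mem hn).1
  have hπ4 : π/n ≤ π/4 := (delta_mem hn).2
  have hπ : π = (n:ℝ)*(π/n) := by field_simp
  have hdecomp : (2*(m:ℝ)-1)*π/n = (2*((m % n : ℕ):ℝ)-1)*π/n + (m/n : ℕ)*(2*π) := by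
    have hm : (m:ℝ) = ((m % n : ℕ):ℝ) + ((m/n : ℕ):ℝ) * n := by
      exact_mod_cast congrArg (Nat.cast : ℕ → ℝ) (Nat.mod_add_div' m n).symm
    rw [hm]; field_simp; ring
  rw [hdecomp, Real.cos_add_nat_mul_two_pi]
  set r := m % n with hrdef
  have hrlt : r < n := Nat.mod_lt _ (by omega)
  have hrcast : ((r:ℕ):ℝ) ≤ (n:ℝ) - 1 := by
    have : (r:ℕ) ≤ n - 1 := by omega
    have h2 := (Nat.cast_le (α := ℝ)).2 this
    have : ((n-1 : ℕ):ℝ) = (n:ℝ) - 1 := by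
      have : (1:ℕ) ≤ n := by omega
      push_cast [this]; ring
    linarith [h2, this.le]
  rcases Nat.eq_zero_or_pos r with h0 | hpos
  · rw [h0]
    have : (2*((0:ℕ):ℝ)-1)*π/n = -(π/n) := by push_cast; ring
    rw [this, Real.cos_neg, abs_of_pos (cos_delta_pos hn)]
  · have h1r : (1:ℝ) ≤ (r:ℝ) := by exact_mod_cast hpos
    have hxeq : (2*(r:ℝ)-1)*π/n = (2*(r:ℝ)-1)*(π/n) := by ring
    rcases le_or_gt (2*r) n with hle | hgt
    · -- x ∈ [π/n, π - π/n]
      have hle' : (2*(r:ℝ)) ≤ (n:ℝ) := by exact_mod_cast hle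
      have hx1 : π/n ≤ (2*(r:ℝ)-1)*(π/n) := by nlinarith
      have hx2 : (2*(r:ℝ)-1)*(π/n) ≤ π - π/n := by nlinarith
      rw [hxeq, abs_le]
      constructor
      · rw [← Real.cos_pi_sub]
        apply Real.cos_le_cos_of_nonneg_of_le_pi _ _ hx2
        · nlinarith
        · linarith
      · apply Real.cos_le_cos_of_nonneg_of_le_pi hπn.le _ hx1
        linarith
    · -- 2r ≥ n + 2 since n even, 2r even, 2r > n
      have hge : n + 2 ≤ 2*r := by
        obtain ⟨h, rfl⟩ := hne; omega
      have hge' : (n:ℝ) + 2 ≤ 2*(r:ℝ) := by exact_mod_cast hge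
      rw [hxeq, ← Real.cos_two_pi_sub, abs_le]
      have hy1 : π/n ≤ 2*π - (2*(r:ℝ)-1)*(π/n) := by nlinarith
      have hy2 : 2*π - (2*(r:ℝ)-1)*(π/n) ≤ π - π/n := by nlinarith
      constructor
      · rw [← Real.cos_pi_sub]
        apply Real.cos_le_cos_of_nonneg_of_le_pi _ _ hy2
        · nlinarith
        · linarith
      · apply Real.cos_le_cos_of_nonneg_of_le_pi hπn.le _ hy1
        linarith



lemma cos_shift (A d : ℝ) : Real.cos (A + d) - Real.cos (A - d) = -(2 * Real.sin A * Real.sin d) := by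
  rw [Real.cos_add, Real.cos_sub]; ring

lemma sin_shift (A d : ℝ) : Real.sin (A + d) - Real.sin (A - d) = 2 * Real.cos A * Real.sin d := by
  rw [Real.sin_add, Real.sin_sub]; ring

lemma cross_id (A d : ℝ) :
    Real.sin (A + d) * Real.cos (A - d) - Real.sin (A - d) * Real.cos (A + d)
      = 2 * Real.sin d * Real.cos d := by
  rw [Real.sin_add, Real.sin_sub, Real.cos_add, Real.cos_sub]
  linear_combination (2 * Real.sin d * Real.cos d) * (Real.sin_sq_add_cos_sq A)

set_option maxHeartbeats 1000000 in
/-- 2D sector decomposition lemma. -/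
lemma sector (hn : 4 ≤ n) {x y c : ℝ}
    (hc : ∀ j : ℕ, x * Real.cos (2*(j:ℝ)*π/n) + y * Real.sin (2*(j:ℝ)*π/n) ≤ c) :
    ∃ (j : ℕ) (a b : ℝ), 0 ≤ a ∧ 0 ≤ b ∧ a + b ≤ c ∧
      x * Real.cos (π/n) = a * Real.cos (2*(j:ℝ)*π/n - π/n) + b * Real.cos (2*(j:ℝ)*π/n + π/n) ∧
      y * Real.cos (π/n) = a * Real.sin (2*(j:ℝ)*π/n - π/n) + b * Real.sin (2*(j:ℝ)*π/n + π/n) := by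
  have hnn : (n:ℝ) ≠ 0 := ne_of_gt (npos hn)
  have hsd : 0 < Real.sin (π/n) := sin_delta_pos hn
  set f : ℕ → ℝ := fun j => x * Real.cos (2*(j:ℝ)*π/n) + y * Real.sin (2*(j:ℝ)*π/n) with hf
  have hfp : ∀ j : ℕ, f (j + n) = f j := by
    intro j
    have := angle_period hn j 1
    simp only [one_mul] at this
    simp only [hf, this.1, this.2]
  obtain ⟨k0, hk0mem, hk0⟩ := Finset.exists_max_image (Finset.Icc 1 n) f ⟨1, by
    simp [Finset.mem_Icc]; omega⟩
  rw [Finset.mem_Icc] at hk0mem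
  obtain ⟨hk1, hkn⟩ := hk0mem
  have hA : f (k0 - 1) ≤ f k0 := by
    rcases eq_or_lt_of_le hk1 with h1 | h1
    · have h0 : k0 - 1 = 0 := by omega
      have h0n : f 0 = f n := by simpa using (hfp 0).symm
      rw [h0, h0n]
      exact hk0 n (by rw [Finset.mem_Icc]; omega)
    · exact hk0 _ (by rw [Finset.mem_Icc]; omega)
  have hB : f (k0 + 1) ≤ f k0 := by
    rcases eq_or_lt_of_le hkn with h1 | h1
    · have h1n : f (k0 + 1) = f 1 := by rw [h1, show n + 1 = 1 + n by ring, hfp 1]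
      rw [h1n]
      exact hk0 1 (by rw [Finset.mem_Icc]; omega)
    · exact hk0 _ (by rw [Finset.mem_Icc]; omega)
  have hm1 : 2*((k0 - 1 : ℕ):ℝ)*π/n = 2*(k0:ℝ)*π/n - 2*(π/n) := by
    rw [Nat.cast_sub hk1]; push_cast; field_simp
  have hp1 : 2*((k0 + 1 : ℕ):ℝ)*π/n = 2*(k0:ℝ)*π/n + 2*(π/n) := by
    push_cast; field_simp
  set φ := 2*(k0:ℝ)*π/n with hφ
  have hfm1 : f (k0 - 1) = x * Real.cos (φ - 2*(π/n)) + y * Real.sin (φ - 2*(π/n)) := by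
    simp only [hf, hm1]
  have hfp1 : f (k0 + 1) = x * Real.cos (φ + 2*(π/n)) + y * Real.sin (φ + 2*(π/n)) := by
    simp only [hf, hp1]
  have hfk : f k0 = x * Real.cos φ + y * Real.sin φ := rfl
  -- trig identities
  have kc1 := cos_shift (φ - π/n) (π/n)
  have ks1 := sin_shift (φ - π/n) (π/n)
  have kc2 := cos_shift (φ + π/n) (π/n)
  have ks2 := sin_shift (φ + π/n) (π/n)
  have kc3 := cos_shift φ (π/n)
  have ks3 := sin_shift φ (π/n)
  have kx := cross_id φ (π/n)
  rw [show φ - π/n + π/n = φ by ring, show φ - π/n - π/n = φ - 2*(π/n) by ring] at kc1 ks1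
  rw [show φ + π/n + π/n = φ + 2*(π/n) by ring, show φ + π/n - π/n = φ by ring] at kc2 ks2
  have h2s : (0:ℝ) < 2 * Real.sin (π/n) := by linarith
  set a' := x * Real.sin (φ + π/n) - y * Real.cos (φ + π/n) with ha'
  set b' := y * Real.cos (φ - π/n) - x * Real.sin (φ - π/n) with hb'
  have hb'e : 2 * Real.sin (π/n) * b' = f k0 - f (k0 - 1) := by
    rw [hfm1, hfk, hb']
    linear_combination (-x) * kc1 - y * ks1
  have ha'e : 2 * Real.sin (π/n) * a' = f k0 - f (k0 + 1) := by
    rw [hfp1, hfk, ha']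
    linear_combination x * kc2 + y * ks2
  have h2s : (0:ℝ) < 2 * Real.sin (π/n) := by linarith
  have hb'0 : 0 ≤ b' := by
    have h1 : 0 ≤ 2 * Real.sin (π/n) * b' := by rw [hb'e]; linarith
    have h3 : b' = 2 * Real.sin (π/n) * b' / (2 * Real.sin (π/n)) := by field_simp
    rw [h3]; exact div_nonneg h1 h2s.le
  have ha'0 : 0 ≤ a' := by
    have h1 : 0 ≤ 2 * Real.sin (π/n) * a' := by rw [ha'e]; linarith
    have h3 : a' = 2 * Real.sin (π/n) * a' / (2 * Real.sin (π/n)) := by field_simp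
    rw [h3]; exact div_nonneg h1 h2s.le
  have hsum : a' + b' = 2 * Real.sin (π/n) * f k0 := by
    rw [ha', hb', hfk]
    linear_combination x * ks3 - y * kc3
  have hxe : x * (2 * Real.sin (π/n) * Real.cos (π/n))
      = a' * Real.cos (φ - π/n) + b' * Real.cos (φ + π/n) := by
    rw [ha', hb']
    linear_combination (-x) * kx
  have hye : y * (2 * Real.sin (π/n) * Real.cos (π/n))
      = a' * Real.sin (φ - π/n) + b' * Real.sin (φ + π/n) := by
    rw [ha', hb']
    linear_combination (-y) * kx
  refine ⟨k0, a' / (2 * Real.sin (π/n)), b' / (2 * Real.sin (π/n)),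
    div_nonneg ha'0 h2s.le, div_nonneg hb'0 h2s.le, ?_, ?_, ?_⟩
  · have hab : a' / (2 * Real.sin (π/n)) + b' / (2 * Real.sin (π/n)) = f k0 := by
      rw [← add_div, hsum]
      field_simp
    rw [hab]; exact hc k0
  · rw [div_mul_eq_mul_div, div_mul_eq_mul_div, ← add_div, eq_div_iff (ne_of_gt h2s)]
    linarith [hxe]
  · rw [div_mul_eq_mul_div, div_mul_eq_mul_div, ← add_div, eq_div_iff (ne_of_gt h2s)]
    linarith [hye]

lemma extEffect_mem (hn : 4 ≤ n) (hne : Even n) (k : ℕ) : extEffect n k ∈ polygonE n := by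
  intro j
  have hcp := cos_delta_pos hn
  have hb := cos_odd_bound hn hne (k + (j:ℕ))
  rw [abs_le] at hb
  rw [pair_formula hn k (j:ℕ)]
  constructor
  · have h2 : -1 ≤ Real.cos ((2 * ((k + (j:ℕ) : ℕ):ℝ) - 1) * π / n) / Real.cos (π/n) := by
      rw [le_div_iff₀ hcp]; linarith [hb.1]
    linarith
  · have h2 : Real.cos ((2 * ((k + (j:ℕ) : ℕ):ℝ) - 1) * π / n) / Real.cos (π/n) ≤ 1 :=
      (div_le_one hcp).2 hb.2
    linarith

lemma zero_mem : ((0,0,0) : ℝ × ℝ × ℝ) ∈ polygonE n := by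
  intro k; simp [pair, pureState]

lemma one_mem : ((0,0,1) : ℝ × ℝ × ℝ) ∈ polygonE n := by
  intro k; simp [pair, pureState]

lemma coord_bounds (hn : 4 ≤ n) (hne : Even n) {e : ℝ × ℝ × ℝ} (he : e ∈ polygonE n) (j : ℕ) :
    e.1 * Real.cos (2*(j:ℝ)*π/n) + e.2.1 * Real.sin (2*(j:ℝ)*π/n) ≤ min e.2.2 (1 - e.2.2) ∧
    -(min e.2.2 (1 - e.2.2)) ≤ e.1 * Real.cos (2*(j:ℝ)*π/n) + e.2.1 * Real.sin (2*(j:ℝ)*π/n) := by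
  have h1 := mem_all hn he j
  have h2 := mem_all hn he (j + n/2)
  rw [opp_state hn hne j] at h2
  simp only [pair, pureState, mul_one, mul_neg] at h1 h2
  constructor
  · apply le_min
    · linarith [h2.1]
    · linarith [h1.2]
  · rw [neg_le]
    apply le_min
    · linarith [h1.1]
    · linarith [h2.2]

lemma min_nonneg' (hn : 4 ≤ n) (hne : Even n) {e : ℝ × ℝ × ℝ} (he : e ∈ polygonE n) :
    0 ≤ min e.2.2 (1 - e.2.2) := by
  have h := coord_bounds hn hne he 0
  linarith [h.1, h.2]

lemma vertex_eq (hn : 4 ≤ n) (j : ℕ) :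
    ∃ k : Fin n,
      Real.cos (2*(j:ℝ)*π/n + π/n) = (extEffect n (k:ℕ)).1 * (2 * Real.cos (π/n)) ∧
      Real.sin (2*(j:ℝ)*π/n + π/n) = (extEffect n (k:ℕ)).2.1 * (2 * Real.cos (π/n)) := by
  have hnn : (n:ℝ) ≠ 0 := ne_of_gt (npos hn)
  obtain ⟨k, hklt, hC, hS⟩ : ∃ k : ℕ, k < n ∧
      Real.cos (2*(k:ℝ)*π/n) = Real.cos (2*(j:ℝ)*π/n) ∧
      Real.sin (2*(k:ℝ)*π/n) = -Real.sin (2*(j:ℝ)*π/n) := by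
    have hper := angle_period hn (j % n) (j / n)
    rw [Nat.mod_add_div' j n] at hper
    rcases Nat.eq_zero_or_pos (j % n) with h0 | hpos
    · rw [h0] at hper
      refine ⟨0, by omega, hper.1.symm, ?_⟩
      have h00 : Real.sin (2*((0:ℕ):ℝ)*π/n) = 0 := by norm_num
      rw [h00, hper.2, h00]
      norm_num
    · have hrn : j % n < n := Nat.mod_lt _ (by omega)
      refine ⟨n - j % n, by omega, ?_, ?_⟩
      · have hcast : ((n - j % n : ℕ):ℝ) = (n:ℝ) - (j % n : ℕ) := by
          exact_mod_cast Nat.cast_sub hrn.le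
        have hang : 2*((n - j % n : ℕ):ℝ)*π/n = 2*π - 2*((j % n : ℕ):ℝ)*π/n := by
          rw [hcast]; field_simp
        rw [hang, Real.cos_two_pi_sub, hper.1]
      · have hcast : ((n - j % n : ℕ):ℝ) = (n:ℝ) - (j % n : ℕ) := by
          exact_mod_cast Nat.cast_sub hrn.le
        have hang : 2*((n - j % n : ℕ):ℝ)*π/n = 2*π - 2*((j % n : ℕ):ℝ)*π/n := by
          rw [hcast]; field_simp
        rw [hang, Real.sin_two_pi_sub, hper.2]
  refine ⟨⟨k, hklt⟩, ?_, ?_⟩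
  · show Real.cos (2*(j:ℝ)*π/n + π/n) = (extEffect n k).1 * (2 * Real.cos (π/n))
    simp only [extEffect, Real.tan_eq_sin_div_cos]
    rw [Real.cos_add, hC, hS]
    have hcp := (cos_delta_pos hn).ne'
    field_simp
    ring
  · show Real.sin (2*(j:ℝ)*π/n + π/n) = (extEffect n k).2.1 * (2 * Real.cos (π/n))
    simp only [extEffect, Real.tan_eq_sin_div_cos]
    rw [Real.sin_add, hC, hS]
    have hcp := (cos_delta_pos hn).ne'
    field_simp

lemma polygonE_convex : Convex ℝ (polygonE n) := by
  intro p hp q hq a b ha hb hab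
  intro k
  have h1 := hp k
  have h2 := hq k
  have hpair : pair (a • p + b • q) (pureState n k)
      = a * pair p (pureState n k) + b * pair q (pureState n k) := by
    simp only [pair, Prod.fst_add, Prod.snd_add, Prod.smul_fst, Prod.smul_snd, smul_eq_mul]
    ring
  rw [hpair]
  constructor
  · have := mul_nonneg ha h1.1
    have := mul_nonneg hb h2.1
    linarith
  · have := mul_le_mul_of_nonneg_left h1.2 ha
    have := mul_le_mul_of_nonneg_left h2.2 hb
    linarith

set_option maxHeartbeats 1000000 in
lemma E_subset_hull (hn : 4 ≤ n) (hne : Even n) :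
    polygonE n ⊆ convexHull ℝ (insert ((0, 0, 0) : ℝ × ℝ × ℝ)
      (insert ((0, 0, 1) : ℝ × ℝ × ℝ) {e | ∃ k : Fin n, e = extEffect n k})) := by
  intro e he
  have hnn : (n:ℝ) ≠ 0 := ne_of_gt (npos hn)
  have hcp := cos_delta_pos hn
  have hm0 := min_nonneg' hn hne he
  have hc : ∀ j : ℕ, e.1 * Real.cos (2*(j:ℝ)*π/n) + e.2.1 * Real.sin (2*(j:ℝ)*π/n)
      ≤ min e.2.2 (1 - e.2.2) := fun j => (coord_bounds hn hne he j).1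
  obtain ⟨j, a, b, ha, hb, hab, hx, hy⟩ := sector hn hc
  obtain ⟨kB, hB1, hB2⟩ := vertex_eq hn j
  obtain ⟨kA, hA1, hA2⟩ := vertex_eq hn (j + n - 1)
  -- convert the angle of kA
  have hj1 : (1:ℕ) ≤ j + n := by omega
  have hcast : ((j + n - 1 : ℕ):ℝ) = (j:ℝ) + n - 1 := by
    rw [Nat.cast_sub hj1]; push_cast; ring
  have hangA : 2*((j + n - 1 : ℕ):ℝ)*π/n + π/n = (2*(j:ℝ)*π/n - π/n) + 2*π := by
    rw [hcast]; field_simp; ring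
  rw [hangA, Real.cos_add_two_pi] at hA1
  rw [hangA, Real.sin_add_two_pi] at hA2
  -- bounds on z
  have hz0 : 0 ≤ e.2.2 := by
    have := min_le_left e.2.2 (1 - e.2.2); linarith
  have hz1 : e.2.2 ≤ 1 := by
    have := min_le_right e.2.2 (1 - e.2.2); linarith
  have habz : a + b ≤ e.2.2 := le_trans hab (min_le_left _ _)
  have habz' : a + b ≤ 1 - e.2.2 := le_trans hab (min_le_right _ _)
  -- the convex combination
  set w : Fin 4 → ℝ := ![1 - e.2.2 - a - b, e.2.2 - a - b, 2*a, 2*b] with hw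
  set p : Fin 4 → ℝ × ℝ × ℝ := ![(0,0,0), (0,0,1), extEffect n (kA:ℕ), extEffect n (kB:ℕ)]
    with hp
  have hw0 : ∀ i ∈ Finset.univ, 0 ≤ w i := by
    intro i _
    fin_cases i <;> simp [hw] <;> linarith
  have hwsum : ∑ i, w i = 1 := by
    simp [hw, Fin.sum_univ_four]; ring
  have hpmem : ∀ i ∈ Finset.univ, p i ∈ (insert ((0, 0, 0) : ℝ × ℝ × ℝ)
      (insert ((0, 0, 1) : ℝ × ℝ × ℝ) {e | ∃ k : Fin n, e = extEffect n k})) := by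
    intro i _
    fin_cases i
    · left; rfl
    · right; left; rfl
    · right; right; exact ⟨kA, rfl⟩
    · right; right; exact ⟨kB, rfl⟩
  have hcm := Finset.centerMass_mem_convexHull Finset.univ hw0 (by rw [hwsum]; norm_num) hpmem
  rw [Finset.centerMass_eq_of_sum_1 _ p hwsum] at hcm
  have heq : ∑ i, w i • p i = e := by
    rw [Fin.sum_univ_four]
    have h1 : e.1 * Real.cos (π/n) = ((2*a) * (extEffect n (kA:ℕ)).1
        + (2*b) * (extEffect n (kB:ℕ)).1) * Real.cos (π/n) := by
      rw [hx, hA1, hB1]; ring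
    have h2 : e.2.1 * Real.cos (π/n) = ((2*a) * (extEffect n (kA:ℕ)).2.1
        + (2*b) * (extEffect n (kB:ℕ)).2.1) * Real.cos (π/n) := by
      rw [hy, hA2, hB2]; ring
    have h1' := mul_right_cancel₀ hcp.ne' h1
    have h2' := mul_right_cancel₀ hcp.ne' h2
    have hzA : (extEffect n (kA:ℕ)).2.2 = 1/2 := rfl
    have hzB : (extEffect n (kB:ℕ)).2.2 = 1/2 := rfl
    apply Prod.ext
    · simp only [hw, hp, Prod.fst_add, Prod.smul_fst, smul_eq_mul,
        Matrix.cons_val_zero, Matrix.cons_val_one, Matrix.head_cons, Matrix.cons_val_two,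
        Matrix.tail_cons, Matrix.cons_val_three]
      rw [h1']; norm_num; try ring
    apply Prod.ext
    · simp only [hw, hp, Prod.snd_add, Prod.smul_snd, Prod.fst_add, Prod.smul_fst, smul_eq_mul,
        Matrix.cons_val_zero, Matrix.cons_val_one, Matrix.head_cons, Matrix.cons_val_two,
        Matrix.tail_cons, Matrix.cons_val_three]
      rw [h2']; norm_num; try ring
    · simp only [hw, hp, Prod.snd_add, Prod.smul_snd, smul_eq_mul,
        Matrix.cons_val_zero, Matrix.cons_val_one, Matrix.head_cons, Matrix.cons_val_two,
        Matrix.tail_cons, Matrix.cons_val_three, hzA, hzB]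
      norm_num; try ring
  rw [heq] at hcm
  exact hcm

lemma hull_eq (hn : 4 ≤ n) (hne : Even n) :
    polygonE n = convexHull ℝ (insert ((0, 0, 0) : ℝ × ℝ × ℝ)
      (insert ((0, 0, 1) : ℝ × ℝ × ℝ) {e | ∃ k : Fin n, e = extEffect n k})) := by
  apply le_antisymm (E_subset_hull hn hne)
  apply convexHull_min _ polygonE_convex
  rintro v (rfl | rfl | ⟨k, rfl⟩)
  · exact zero_mem
  · exact one_mem
  · exact extEffect_mem hn hne k

lemma pair_comb (a b : ℝ) (p q w : ℝ × ℝ × ℝ) :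
    pair (a • p + b • q) w = a * pair p w + b * pair q w := by
  simp only [pair, Prod.fst_add, Prod.snd_add, Prod.smul_fst, Prod.smul_snd, smul_eq_mul]
  ring

lemma z_comb (a b : ℝ) (p q : ℝ × ℝ × ℝ) : (a • p + b • q).2.2 = a * p.2.2 + b * q.2.2 := by
  simp only [Prod.snd_add, Prod.smul_snd, smul_eq_mul]

lemma z_in (hn : 4 ≤ n) (hne : Even n) {p : ℝ × ℝ × ℝ} (hp : p ∈ polygonE n) :
    0 ≤ p.2.2 ∧ p.2.2 ≤ 1 := by
  have h := min_nonneg' hn hne hp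
  constructor
  · linarith [min_le_left p.2.2 (1 - p.2.2)]
  · linarith [min_le_right p.2.2 (1 - p.2.2)]

lemma degenerate (hn : 4 ≤ n) (hne : Even n) {p : ℝ × ℝ × ℝ} (hp : p ∈ polygonE n)
    (h3 : min p.2.2 (1 - p.2.2) = 0) : p.1 = 0 ∧ p.2.1 = 0 := by
  have h0 := coord_bounds hn hne hp 0
  have h1 := coord_bounds hn hne hp 1
  rw [h3] at h0 h1
  have e0c : Real.cos (2*((0:ℕ):ℝ)*π/n) = 1 := by norm_num
  have e0s : Real.sin (2*((0:ℕ):ℝ)*π/n) = 0 := by norm_num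
  rw [e0c, e0s] at h0
  simp only [mul_one, mul_zero, add_zero, neg_zero] at h0
  have hp1 : p.1 = 0 := le_antisymm h0.1 h0.2
  have e1 : 2*((1:ℕ):ℝ)*π/n = 2*π/n := by norm_num
  rw [e1] at h1
  have hs1 : 0 < Real.sin (2*π/n) := sin_two_delta_pos hn
  rw [hp1] at h1
  simp only [zero_mul, zero_add, neg_zero] at h1
  have h1e : p.2.1 * Real.sin (2*π/n) = 0 := le_antisymm h1.1 h1.2
  rcases mul_eq_zero.mp h1e with h | h
  · exact ⟨hp1, h⟩
  · exact absurd h (ne_of_gt hs1)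

lemma zero_face (hn : 4 ≤ n) (hne : Even n) {p : ℝ × ℝ × ℝ} (hp : p ∈ polygonE n)
    (h : p.2.2 = 0) : p = ((0,0,0) : ℝ × ℝ × ℝ) := by
  have hd := degenerate hn hne hp (by rw [h]; norm_num)
  apply Prod.ext hd.1
  apply Prod.ext hd.2
  exact h

lemma one_face (hn : 4 ≤ n) (hne : Even n) {p : ℝ × ℝ × ℝ} (hp : p ∈ polygonE n)
    (h : p.2.2 = 1) : p = ((0,0,1) : ℝ × ℝ × ℝ) := by
  have hd := degenerate hn hne hp (by rw [h]; norm_num)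
  apply Prod.ext hd.1
  apply Prod.ext hd.2
  exact h

lemma zero_extreme (hn : 4 ≤ n) (hne : Even n) :
    ((0,0,0) : ℝ × ℝ × ℝ) ∈ Set.extremePoints ℝ (polygonE n) := by
  refine ⟨zero_mem, ?_⟩
  rintro p hp q hq ⟨a, b, ha, hb, hab, habe⟩
  have hz : a * p.2.2 + b * q.2.2 = 0 := by
    have := congrArg (fun v : ℝ × ℝ × ℝ => v.2.2) habe
    simpa [z_comb] using this
  have hpz := (z_in hn hne hp).1
  have hqz := (z_in hn hne hq).1
  have hp3 : p.2.2 = 0 := by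
    by_contra hne'
    have hlt : 0 < p.2.2 := lt_of_le_of_ne hpz (Ne.symm hne')
    nlinarith [mul_pos ha hlt, mul_nonneg hb.le hqz]
  have hq3 : q.2.2 = 0 := by
    by_contra hne'
    have hlt : 0 < q.2.2 := lt_of_le_of_ne hqz (Ne.symm hne')
    nlinarith [mul_pos hb hlt, mul_nonneg ha.le hpz]
  exact zero_face hn hne hp hp3

lemma one_extreme (hn : 4 ≤ n) (hne : Even n) :
    ((0,0,1) : ℝ × ℝ × ℝ) ∈ Set.extremePoints ℝ (polygonE n) := by
  refine ⟨one_mem, ?_⟩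
  rintro p hp q hq ⟨a, b, ha, hb, hab, habe⟩
  have hz : a * p.2.2 + b * q.2.2 = 1 := by
    have := congrArg (fun v : ℝ × ℝ × ℝ => v.2.2) habe
    simpa [z_comb] using this
  have hpz := (z_in hn hne hp).2
  have hqz := (z_in hn hne hq).2
  have hp3 : p.2.2 = 1 := by
    by_contra hne'
    have hlt : p.2.2 < 1 := lt_of_le_of_ne hpz hne'
    nlinarith [mul_lt_mul_of_pos_left hlt ha, mul_le_mul_of_nonneg_left hqz hb.le]
  have hq3 : q.2.2 = 1 := by
    by_contra hne'
    have hlt : q.2.2 < 1 := lt_of_le_of_ne hqz hne'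
    nlinarith [mul_lt_mul_of_pos_left hlt hb, mul_le_mul_of_nonneg_left hpz ha.le]
  exact one_face hn hne hp hp3

lemma half_cast (hn : 4 ≤ n) (hne : Even n) : ((n/2 : ℕ):ℝ) = (n:ℝ)/2 := by
  have h2 : n = 2 * (n/2) := by obtain ⟨h, rfl⟩ := hne; omega
  have hcast : (n:ℝ) = 2 * ((n/2 : ℕ):ℝ) := by exact_mod_cast congrArg (Nat.cast : ℕ → ℝ) h2
  linarith

lemma pair_vals (hn : 4 ≤ n) (hne : Even n) (k : Fin n) :
    pair (extEffect n (k:ℕ)) (pureState n (n - (k:ℕ))) = 1 ∧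
    pair (extEffect n (k:ℕ)) (pureState n (n - (k:ℕ) + 1)) = 1 ∧
    pair (extEffect n (k:ℕ)) (pureState n (n - (k:ℕ) + n/2)) = 0 ∧
    pair (extEffect n (k:ℕ)) (pureState n (n - (k:ℕ) + 1 + n/2)) = 0 := by
  have hk : (k:ℕ) < n := k.2
  have hcp := cos_delta_pos hn
  have hnn : (n:ℝ) ≠ 0 := ne_of_gt (npos hn)
  have hhalf := half_cast hn hne
  refine ⟨?_, ?_, ?_, ?_⟩
  · rw [pair_formula hn, show (k:ℕ) + (n - (k:ℕ)) = n from by omega]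
    have hang : (2*((n:ℕ):ℝ) - 1)*π/n = 2*π - π/n := by push_cast; field_simp
    rw [hang, Real.cos_two_pi_sub, div_self hcp.ne']
    norm_num
  · rw [pair_formula hn, show (k:ℕ) + (n - (k:ℕ) + 1) = n + 1 from by omega]
    have hang : (2*((n+1:ℕ):ℝ) - 1)*π/n = π/n + 2*π := by push_cast; field_simp; ring
    rw [hang, Real.cos_add_two_pi, div_self hcp.ne']
    norm_num
  · rw [pair_formula hn, show (k:ℕ) + (n - (k:ℕ) + n/2) = n + n/2 from by omega]
    have hang : (2*((n + n/2:ℕ):ℝ) - 1)*π/n = (π - π/n) + 2*π := by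
      push_cast [hhalf]; field_simp; ring
    rw [hang, Real.cos_add_two_pi, Real.cos_pi_sub, neg_div, div_self hcp.ne']
    norm_num
  · rw [pair_formula hn, show (k:ℕ) + (n - (k:ℕ) + 1 + n/2) = n + 1 + n/2 from by omega]
    have hang : (2*((n + 1 + n/2:ℕ):ℝ) - 1)*π/n = (π/n + π) + 2*π := by
      push_cast [hhalf]; field_simp; ring
    rw [hang, Real.cos_add_two_pi, Real.cos_add_pi, neg_div, div_self hcp.ne']
    norm_num

lemma eq_of_face (hn : 4 ≤ n) (hne : Even n) (k : Fin n) {p : ℝ × ℝ × ℝ}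
    (h0 : pair p (pureState n (n - (k:ℕ))) = 1)
    (h1 : pair p (pureState n (n - (k:ℕ) + 1)) = 1)
    (h2 : pair p (pureState n (n - (k:ℕ) + n/2)) = 0)
    (h3 : pair p (pureState n (n - (k:ℕ) + 1 + n/2)) = 0) :
    p = extEffect n (k:ℕ) := by
  obtain ⟨hv0, hv1, hv2, hv3⟩ := pair_vals hn hne k
  rw [opp_state hn hne (n - (k:ℕ))] at h2 hv2
  rw [opp_state hn hne (n - (k:ℕ) + 1)] at h3 hv3
  simp only [pair, pureState, mul_one, mul_neg] at h0 h1 h2 h3 hv0 hv1 hv2 hv3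
  have hx3 : (extEffect n (k:ℕ)).2.2 = 1/2 := rfl
  have hp3 : p.2.2 = 1/2 := by linarith
  have eq1 : (p.1 - (extEffect n (k:ℕ)).1) * Real.cos (2*((n - (k:ℕ) : ℕ):ℝ)*π/n)
      + (p.2.1 - (extEffect n (k:ℕ)).2.1) * Real.sin (2*((n - (k:ℕ) : ℕ):ℝ)*π/n) = 0 := by
    linear_combination h0 - hv0 - hp3 + hx3
  have eq2 : (p.1 - (extEffect n (k:ℕ)).1) * Real.cos (2*((n - (k:ℕ) + 1 : ℕ):ℝ)*π/n)
      + (p.2.1 - (extEffect n (k:ℕ)).2.1) * Real.sin (2*((n - (k:ℕ) + 1 : ℕ):ℝ)*π/n) = 0 := by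
    linear_combination h1 - hv1 - hp3 + hx3
  have hnn : (n:ℝ) ≠ 0 := ne_of_gt (npos hn)
  have hrel : 2*((n - (k:ℕ) + 1 : ℕ):ℝ)*π/n = 2*((n - (k:ℕ) : ℕ):ℝ)*π/n + 2*(π/n) := by
    push_cast; field_simp
  rw [hrel, Real.cos_add, Real.sin_add] at eq2
  have hs2 : 0 < Real.sin (2*(π/n)) := by
    have := sin_two_delta_pos hn
    rw [show 2*π/(n:ℝ) = 2*(π/n) by ring] at this
    exact this
  have hdet : Real.sin (2*(π/n)) * ((p.2.1 - (extEffect n (k:ℕ)).2.1)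
        * Real.cos (2*((n - (k:ℕ) : ℕ):ℝ)*π/n)
      - (p.1 - (extEffect n (k:ℕ)).1) * Real.sin (2*((n - (k:ℕ) : ℕ):ℝ)*π/n)) = 0 := by
    linear_combination eq2 - Real.cos (2*(π/n)) * eq1
  have hBA : (p.2.1 - (extEffect n (k:ℕ)).2.1) * Real.cos (2*((n - (k:ℕ) : ℕ):ℝ)*π/n)
      - (p.1 - (extEffect n (k:ℕ)).1) * Real.sin (2*((n - (k:ℕ) : ℕ):ℝ)*π/n) = 0 := by
    rcases mul_eq_zero.mp hdet with h | h
    · exact absurd h (ne_of_gt hs2)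
    · exact h
  have pyth := Real.cos_sq_add_sin_sq (2*((n - (k:ℕ) : ℕ):ℝ)*π/n)
  have hA : p.1 - (extEffect n (k:ℕ)).1 = 0 := by
    linear_combination Real.cos (2*((n - (k:ℕ) : ℕ):ℝ)*π/n) * eq1
      - Real.sin (2*((n - (k:ℕ) : ℕ):ℝ)*π/n) * hBA - (p.1 - (extEffect n (k:ℕ)).1) * pyth
  have hB : p.2.1 - (extEffect n (k:ℕ)).2.1 = 0 := by
    linear_combination Real.sin (2*((n - (k:ℕ) : ℕ):ℝ)*π/n) * eq1
      + Real.cos (2*((n - (k:ℕ) : ℕ):ℝ)*π/n) * hBA - (p.2.1 - (extEffect n (k:ℕ)).2.1) * pyth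
  apply Prod.ext (by linarith)
  apply Prod.ext (by linarith)
  rw [hp3]
  exact hx3.symm

lemma ext_extreme (hn : 4 ≤ n) (hne : Even n) (k : Fin n) :
    extEffect n (k:ℕ) ∈ Set.extremePoints ℝ (polygonE n) := by
  refine ⟨extEffect_mem hn hne (k:ℕ), ?_⟩
  have main : ∀ r ∈ polygonE n, ∀ s ∈ polygonE n, ∀ c d : ℝ, 0 < c → 0 < d → c + d = 1 →
      c • r + d • s = extEffect n (k:ℕ) → r = extEffect n (k:ℕ) := by
    intro r hr s hs c d hc hd hcd hcomb
    obtain ⟨hv0, hv1, hv2, hv3⟩ := pair_vals hn hne k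
    have hw0 : c * pair r (pureState n (n - (k:ℕ))) + d * pair s (pureState n (n - (k:ℕ))) = 1 := by
      rw [← pair_comb, hcomb]; exact hv0
    have hw1 : c * pair r (pureState n (n - (k:ℕ) + 1))
        + d * pair s (pureState n (n - (k:ℕ) + 1)) = 1 := by
      rw [← pair_comb, hcomb]; exact hv1
    have hw2 : c * pair r (pureState n (n - (k:ℕ) + n/2))
        + d * pair s (pureState n (n - (k:ℕ) + n/2)) = 0 := by
      rw [← pair_comb, hcomb]; exact hv2
    have hw3 : c * pair r (pureState n (n - (k:ℕ) + 1 + n/2))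
        + d * pair s (pureState n (n - (k:ℕ) + 1 + n/2)) = 0 := by
      rw [← pair_comb, hcomb]; exact hv3
    have hr0 := mem_all hn hr (n - (k:ℕ))
    have hr1 := mem_all hn hr (n - (k:ℕ) + 1)
    have hr2 := mem_all hn hr (n - (k:ℕ) + n/2)
    have hr3 := mem_all hn hr (n - (k:ℕ) + 1 + n/2)
    have hs0 := mem_all hn hs (n - (k:ℕ))
    have hs1 := mem_all hn hs (n - (k:ℕ) + 1)
    have hs2 := mem_all hn hs (n - (k:ℕ) + n/2)
    have hs3 := mem_all hn hs (n - (k:ℕ) + 1 + n/2)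
    -- the functional S
    have hSr : pair r (pureState n (n - (k:ℕ))) + pair r (pureState n (n - (k:ℕ) + 1))
        - pair r (pureState n (n - (k:ℕ) + n/2))
        - pair r (pureState n (n - (k:ℕ) + 1 + n/2)) ≤ 2 := by
      linarith [hr0.2, hr1.2, hr2.1, hr3.1]
    have hSs : pair s (pureState n (n - (k:ℕ))) + pair s (pureState n (n - (k:ℕ) + 1))
        - pair s (pureState n (n - (k:ℕ) + n/2))
        - pair s (pureState n (n - (k:ℕ) + 1 + n/2)) ≤ 2 := by
      linarith [hs0.2, hs1.2, hs2.1, hs3.1]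
    have hsum : c * (pair r (pureState n (n - (k:ℕ))) + pair r (pureState n (n - (k:ℕ) + 1))
        - pair r (pureState n (n - (k:ℕ) + n/2))
        - pair r (pureState n (n - (k:ℕ) + 1 + n/2)))
        + d * (pair s (pureState n (n - (k:ℕ))) + pair s (pureState n (n - (k:ℕ) + 1))
        - pair s (pureState n (n - (k:ℕ) + n/2))
        - pair s (pureState n (n - (k:ℕ) + 1 + n/2))) = 2 := by
      linear_combination hw0 + hw1 - hw2 - hw3
    have hSr2 : pair r (pureState n (n - (k:ℕ))) + pair r (pureState n (n - (k:ℕ) + 1))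
        - pair r (pureState n (n - (k:ℕ) + n/2))
        - pair r (pureState n (n - (k:ℕ) + 1 + n/2)) = 2 := by
      by_contra hne'
      have hlt := lt_of_le_of_ne hSr hne'
      nlinarith [mul_lt_mul_of_pos_left hlt hc, mul_le_mul_of_nonneg_left hSs hd.le]
    apply eq_of_face hn hne k
    · linarith [hr0.2, hr1.2, hr2.1, hr3.1, hSr2]
    · linarith [hr0.2, hr1.2, hr2.1, hr3.1, hSr2]
    · linarith [hr0.2, hr1.2, hr2.1, hr3.1, hSr2]
    · linarith [hr0.2, hr1.2, hr2.1, hr3.1, hSr2]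
  rintro p hp q hq ⟨a, b, ha, hb, hab, habe⟩
  exact main p hp q hq a b ha hb hab habe

end Aux

/-- for even `n`, the extremal points of the polygon effect space are
exactly `o`, `u`, and the `n` points `e_k`, all of which lie on `z = 1/2`. -/
theorem polygon_extreme_points (n : ℕ) (hn : 4 ≤ n) (hne : Even n) :
    Set.extremePoints ℝ (polygonE n)
      = insert ((0, 0, 0) : ℝ × ℝ × ℝ) (insert ((0, 0, 1) : ℝ × ℝ × ℝ)
          {e | ∃ k : Fin n, e = extEffect n k}) ∧
    ∀ k : Fin n, (extEffect n k).2.2 = 1/2 := by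
  constructor
  · apply Set.Subset.antisymm
    · intro x hx
      rw [hull_eq hn hne] at hx
      exact extremePoints_convexHull_subset hx
    · rintro x (rfl | rfl | ⟨k, rfl⟩)
      · exact zero_extreme hn hne
      · exact one_extreme hn hne
      · exact ext_extreme hn hne k
  · intro k
    rfl
end
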